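/- Fix κ ≥ 1. There exists a constant C > 0 depending only on κ such that the following holds: for all positive integers l ≤ m, all λ > 0, all m×l real matrices A, B with AᵀA = BᵀB = I_l, and every l×l symmetric positive definite matrix M all of whose eigenvalues d satisfy λ ≤ d ≤ κλ, if AᵀB is a diagonal matrix with nonnegative diagonal entries, then ‖AMAᵀ − BMBᵀ‖_F ≤ C λ ‖AAᵀ − BBᵀ‖_F. -/

import Mathlib

open Matrix

/-- Frobenius norm of a real matrix: `‖M‖_F = (tr (M Mᵀ))^{1/2}`. -/
noncomputable def frobNorm {m n : Type*} [Fintype m] [Fintype n]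
    (M : Matrix m n ℝ) : ℝ :=
  Real.sqrt (Matrix.trace (M * Mᵀ))

attribute [local instance] Matrix.frobeniusNormedAddCommGroup

lemma frobNorm_eq_norm {m n : Type*} [Fintype m] [Fintype n] (M : Matrix m n ℝ) :
    frobNorm M = ‖M‖ := by
  rw [frobNorm, Matrix.frobenius_norm_def, Real.sqrt_eq_rpow]
  congr 1
  rw [Matrix.trace]
  simp [Matrix.mul_apply, Matrix.diag, Real.rpow_natCast, Real.norm_eq_abs, sq_abs, sq]

lemma frobNorm_nonneg {m n : Type*} [Fintype m] [Fintype n] (M : Matrix m n ℝ) :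
    0 ≤ frobNorm M := Real.sqrt_nonneg _

lemma trace_nonneg_of_posSemidef {n : Type*} [Fintype n] [DecidableEq n]
    {M : Matrix n n ℝ} (h : M.PosSemidef) : 0 ≤ M.trace := by
  rw [Matrix.trace]
  refine Finset.sum_nonneg fun i _ => ?_
  have := h.dotProduct_mulVec_nonneg (Pi.single i 1)
  simpa [dotProduct, Matrix.mulVec, Pi.single_apply, Finset.mul_sum] using this

lemma frobNorm_transpose {m n : Type*} [Fintype m] [Fintype n] (M : Matrix m n ℝ) :
    frobNorm Mᵀ = frobNorm M := by
  rw [frobNorm, frobNorm, transpose_transpose, trace_mul_comm]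

lemma frobNorm_mul_orth {m n l : Type*} [Fintype m] [Fintype n] [Fintype l] [DecidableEq n]
    (X : Matrix m n ℝ) (C : Matrix l n ℝ) (hC : Cᵀ * C = 1) :
    frobNorm (X * Cᵀ) = frobNorm X := by
  rw [frobNorm, frobNorm]
  congr 2
  rw [transpose_mul, transpose_transpose,
    Matrix.mul_assoc X Cᵀ, ← Matrix.mul_assoc Cᵀ C Xᵀ, hC, Matrix.one_mul]

/-- PSD trace bound: if the eigenvalues of Hermitian `M` are bounded by `c` in absolute
value, then `tr (E M² Eᵀ) ≤ c² tr (E Eᵀ)`. -/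
lemma trace_conj_sq_le {l m : Type*} [Fintype l] [Fintype m] [DecidableEq l] [DecidableEq m]
    (c : ℝ) (hc : 0 ≤ c) {M : Matrix l l ℝ} (hM : M.IsHermitian)
    (heig : ∀ i, |hM.eigenvalues i| ≤ c) (E : Matrix m l ℝ) :
    Matrix.trace (E * (M * M) * Eᵀ) ≤ c ^ 2 * Matrix.trace (E * Eᵀ) := by
  set U : Matrix l l ℝ := (hM.eigenvectorUnitary : Matrix l l ℝ) with hUdef
  have hU1 : star U * U = 1 := Unitary.coe_star_mul_self _
  have hU2 : U * star U = 1 := Unitary.coe_mul_star_self _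
  set d : l → ℝ := hM.eigenvalues with hddef
  have hspec : M = U * diagonal d * star U := by
    have := hM.spectral_theorem
    rwa [RCLike.ofReal_real_eq_id, Function.id_comp] at this
  have hMM : M * M = U * diagonal (fun i => d i * d i) * star U := by
    rw [hspec]
    calc U * diagonal d * star U * (U * diagonal d * star U)
        = U * (diagonal d * (star U * U) * diagonal d) * star U := by noncomm_ring
      _ = U * diagonal (fun i => d i * d i) * star U := by
          rw [hU1, mul_one, diagonal_mul_diagonal]
  have hone : (c ^ 2) • (1 : Matrix l l ℝ) = U * diagonal (fun _ => c ^ 2) * star U := by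
    have h2 : (diagonal (fun _ => c ^ 2) : Matrix l l ℝ) = (c ^ 2) • 1 := by
      ext i j; by_cases h : i = j <;> simp [h]
    rw [h2, Matrix.mul_smul, Matrix.mul_one, Matrix.smul_mul, hU2]
  have hN : ((c ^ 2) • (1 : Matrix l l ℝ) - M * M).PosSemidef := by
    have hsub : (c ^ 2) • (1 : Matrix l l ℝ) - M * M
        = U * diagonal (fun i => c ^ 2 - d i * d i) * star U := by
      rw [hone, hMM, ← Matrix.sub_mul, ← Matrix.mul_sub, diagonal_sub]
    rw [hsub]
    have hd : (Matrix.diagonal (fun i => c ^ 2 - d i * d i)).PosSemidef := by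
      refine Matrix.posSemidef_diagonal_iff.mpr fun i => ?_
      have h1 : d i * d i ≤ c ^ 2 := by
        have := heig i
        nlinarith [abs_nonneg (d i), le_abs_self (d i), neg_abs_le (d i)]
      linarith
    exact hd.mul_mul_conjTranspose_same U
  have htr := trace_nonneg_of_posSemidef (hN.mul_mul_conjTranspose_same E)
  rw [show Eᴴ = Eᵀ from conjTranspose_eq_transpose_of_trivial E] at htr
  have hexp : E * ((c ^ 2) • (1 : Matrix l l ℝ) - M * M) * Eᵀ
      = (c ^ 2) • (E * Eᵀ) - E * (M * M) * Eᵀ := by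
    rw [Matrix.mul_sub, Matrix.sub_mul, Matrix.mul_smul, Matrix.mul_one, Matrix.smul_mul]
  rw [hexp] at htr
  simpa [Matrix.trace_sub, Matrix.trace_smul, sub_nonneg] using htr

/-- Fix `κ ≥ 1`. There exists a constant `C > 0` depending only on `κ` such
that for all positive integers `l ≤ m`, all `λ > 0`, all `m×l` matrices `A, B` with orthonormal
columns, and every symmetric positive definite `l×l` matrix `M` all of whose eigenvalues lie in
`[λ, κλ]`, if `AᵀB` is diagonal with nonnegative diagonal entries, then
`‖AMAᵀ − BMBᵀ‖_F ≤ C λ ‖AAᵀ − BBᵀ‖_F`. -/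
theorem exists_const_frobNorm_conjugation_diff_le (κ : ℝ) (hκ : 1 ≤ κ) :
    ∃ C : ℝ, 0 < C ∧
      ∀ (l m : ℕ), 0 < l → l ≤ m →
        ∀ (lam : ℝ), 0 < lam →
          ∀ (A B : Matrix (Fin m) (Fin l) ℝ)
            (M : Matrix (Fin l) (Fin l) ℝ) (hM : M.IsHermitian),
            M.PosDef →
            (∀ i, lam ≤ hM.eigenvalues i ∧ hM.eigenvalues i ≤ κ * lam) →
            Aᵀ * A = 1 → Bᵀ * B = 1 →
            (Aᵀ * B).IsDiag → (∀ i, 0 ≤ (Aᵀ * B) i i) →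
            frobNorm (A * M * Aᵀ - B * M * Bᵀ) ≤ C * lam * frobNorm (A * Aᵀ - B * Bᵀ) := by
  refine ⟨2 * κ, by linarith, ?_⟩
  intro l m hl hlm lam hlam A B M hM _hpd heig hA1 hB1 hdiag hdnn
  have hκ0 : 0 < κ := lt_of_lt_of_le one_pos hκ
  set c : ℝ := κ * lam with hcdef
  have hc0 : 0 < c := mul_pos hκ0 hlam
  have hMt : Mᵀ = M := by
    rw [← Matrix.conjTranspose_eq_transpose_of_trivial]; exact hM
  set E : Matrix (Fin m) (Fin l) ℝ := A - B with hEdef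
  set G : Matrix (Fin l) (Fin l) ℝ := Aᵀ * B with hGdef
  -- diagonal entries of G lie in [0,1]
  have hGle : ∀ i, G i i ≤ 1 := by
    intro i
    have hcs := Finset.sum_mul_sq_le_sq_mul_sq Finset.univ (fun k => A k i) (fun k => B k i)
    have hAi : (∑ k, A k i ^ 2) = 1 := by
      have := congrFun (congrFun hA1 i) i
      simpa [Matrix.mul_apply, Matrix.transpose_apply, Matrix.one_apply, sq] using this
    have hBi : (∑ k, B k i ^ 2) = 1 := by
      have := congrFun (congrFun hB1 i) i
      simpa [Matrix.mul_apply, Matrix.transpose_apply, Matrix.one_apply, sq] using this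
    have hGi : G i i = ∑ k, A k i * B k i := by
      simp [hGdef, Matrix.mul_apply, Matrix.transpose_apply]
    rw [hAi, hBi, mul_one, ← hGi] at hcs
    nlinarith [hdnn i]
  -- trace comparison: tr(G Gᵀ) ≤ tr G
  have hGt : Matrix.trace (G * Gᵀ) ≤ Matrix.trace G := by
    rw [Matrix.trace, Matrix.trace]
    refine Finset.sum_le_sum fun i _ => ?_
    show (G * Gᵀ) i i ≤ G i i
    have : (G * Gᵀ) i i = ∑ j, G i j * G i j := by
      simp [Matrix.mul_apply, Matrix.transpose_apply]
    rw [this]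
    have hsum : (∑ j, G i j * G i j) = G i i * G i i := by
      refine Finset.sum_eq_single i (fun j _ hj => ?_) (by simp)
      have : G i j = 0 := hdiag (Ne.symm hj)
      simp [this]
    rw [hsum]
    nlinarith [hdnn i, hGle i]
  -- tr(E Eᵀ) ≤ tr(D Dᵀ)
  have hED : Matrix.trace (E * Eᵀ) ≤ Matrix.trace ((A * Aᵀ - B * Bᵀ) * (A * Aᵀ - B * Bᵀ)ᵀ) := by
    have eA : Matrix.trace (A * Aᵀ) = Matrix.trace (1 : Matrix (Fin l) (Fin l) ℝ) := by
      rw [Matrix.trace_mul_comm, hA1]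
    have eB : Matrix.trace (B * Bᵀ) = Matrix.trace (1 : Matrix (Fin l) (Fin l) ℝ) := by
      rw [Matrix.trace_mul_comm, hB1]
    have eAB : Matrix.trace (A * Bᵀ) = Matrix.trace G := by
      rw [Matrix.trace_mul_comm, show Bᵀ * A = Gᵀ by rw [hGdef, transpose_mul, transpose_transpose],
        Matrix.trace_transpose]
    have eBA : Matrix.trace (B * Aᵀ) = Matrix.trace G := by
      rw [Matrix.trace_mul_comm, hGdef]
    have l1 : Matrix.trace (E * Eᵀ)
        = Matrix.trace (1 : Matrix (Fin l) (Fin l) ℝ) * 2 - 2 * Matrix.trace G := by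
      rw [hEdef, transpose_sub, Matrix.sub_mul, Matrix.mul_sub, Matrix.mul_sub,
        Matrix.trace_sub, Matrix.trace_sub, Matrix.trace_sub, eA, eB, eAB, eBA]
      ring
    have t3 : Matrix.trace (A * Aᵀ * (B * Bᵀ)) = Matrix.trace (G * Gᵀ) := by
      rw [Matrix.mul_assoc, Matrix.trace_mul_comm,
        show Aᵀ * (B * Bᵀ) * A = G * Gᵀ by
          simp [hGdef, transpose_mul, transpose_transpose, Matrix.mul_assoc]]
    have t4 : Matrix.trace (B * Bᵀ * (A * Aᵀ)) = Matrix.trace (G * Gᵀ) := by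
      rw [Matrix.mul_assoc, Matrix.trace_mul_comm,
        show Bᵀ * (A * Aᵀ) * B = Gᵀ * G by
          simp [hGdef, transpose_mul, transpose_transpose, Matrix.mul_assoc],
        Matrix.trace_mul_comm]
    have t1 : Matrix.trace (A * Aᵀ * (A * Aᵀ)) = Matrix.trace (1 : Matrix (Fin l) (Fin l) ℝ) := by
      rw [show A * Aᵀ * (A * Aᵀ) = A * (Aᵀ * A) * Aᵀ by
        simp [Matrix.mul_assoc], hA1, Matrix.mul_one,
        Matrix.trace_mul_comm, hA1]
    have t2 : Matrix.trace (B * Bᵀ * (B * Bᵀ)) = Matrix.trace (1 : Matrix (Fin l) (Fin l) ℝ) := by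
      rw [show B * Bᵀ * (B * Bᵀ) = B * (Bᵀ * B) * Bᵀ by
        simp [Matrix.mul_assoc], hB1, Matrix.mul_one,
        Matrix.trace_mul_comm, hB1]
    have l2 : Matrix.trace ((A * Aᵀ - B * Bᵀ) * (A * Aᵀ - B * Bᵀ)ᵀ)
        = Matrix.trace (1 : Matrix (Fin l) (Fin l) ℝ) * 2 - 2 * Matrix.trace (G * Gᵀ) := by
      have hDt : (A * Aᵀ - B * Bᵀ)ᵀ = A * Aᵀ - B * Bᵀ := by
        rw [transpose_sub, transpose_mul, transpose_mul, transpose_transpose,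
          transpose_transpose]
      rw [hDt, Matrix.sub_mul, Matrix.mul_sub, Matrix.mul_sub,
        Matrix.trace_sub, Matrix.trace_sub, Matrix.trace_sub, t1, t2, t3, t4]
      ring
    rw [l1, l2]
    linarith
  -- frobNorm (E * M) ≤ c * frobNorm E
  have heigc : ∀ i, |hM.eigenvalues i| ≤ c := by
    intro i
    rcases heig i with ⟨h1, h2⟩
    rw [abs_le]
    constructor <;> nlinarith
  have hkey := trace_conj_sq_le c hc0.le hM heigc E
  have hEM : frobNorm (E * M) ≤ c * frobNorm E := by
    rw [frobNorm, frobNorm]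
    have h1 : (E * M) * (E * M)ᵀ = E * (M * M) * Eᵀ := by
      rw [transpose_mul, hMt]; simp [Matrix.mul_assoc]
    rw [h1]
    calc Real.sqrt (Matrix.trace (E * (M * M) * Eᵀ))
        ≤ Real.sqrt (c ^ 2 * Matrix.trace (E * Eᵀ)) := Real.sqrt_le_sqrt hkey
      _ = c * Real.sqrt (Matrix.trace (E * Eᵀ)) := by
          rw [Real.sqrt_mul (sq_nonneg c), Real.sqrt_sq hc0.le]
  -- split
  have hsplit : A * M * Aᵀ - B * M * Bᵀ = E * M * Aᵀ + B * M * Eᵀ := by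
    rw [hEdef, transpose_sub, Matrix.sub_mul, Matrix.sub_mul, Matrix.mul_sub]
    abel
  have f1 : frobNorm (E * M * Aᵀ) = frobNorm (E * M) := frobNorm_mul_orth (E * M) A hA1
  have f2 : frobNorm (B * M * Eᵀ) = frobNorm (E * M) := by
    rw [← frobNorm_transpose (B * M * Eᵀ),
      show (B * M * Eᵀ)ᵀ = E * M * Bᵀ by simp [transpose_mul, hMt, Matrix.mul_assoc]]
    exact frobNorm_mul_orth (E * M) B hB1
  have htri : frobNorm (A * M * Aᵀ - B * M * Bᵀ)
      ≤ frobNorm (E * M * Aᵀ) + frobNorm (B * M * Eᵀ) := by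
    rw [hsplit, frobNorm_eq_norm, frobNorm_eq_norm, frobNorm_eq_norm]
    exact norm_add_le _ _
  have hEDn : frobNorm E ≤ frobNorm (A * Aᵀ - B * Bᵀ) := Real.sqrt_le_sqrt hED
  calc frobNorm (A * M * Aᵀ - B * M * Bᵀ)
      ≤ frobNorm (E * M * Aᵀ) + frobNorm (B * M * Eᵀ) := htri
    _ = 2 * frobNorm (E * M) := by rw [f1, f2]; ring
    _ ≤ 2 * (c * frobNorm E) := by linarith
    _ ≤ 2 * (c * frobNorm (A * Aᵀ - B * Bᵀ)) := by
        have := mul_le_mul_of_nonneg_left hEDn hc0.le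
        linarith
    _ = 2 * κ * lam * frobNorm (A * Aᵀ - B * Bᵀ) := by rw [hcdef]; ring
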